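/- For any ρ > 0, λ₁₀ ≥ 0, real constants r and b, the function h(π) = (r/ρ - 1 + log ρ + λ₁₀ b + log(1 - π^(1+λ₁₀/ρ)))/(ρ + λ₁₀) satisfies the ODE -(ρ + λ₁₀)h(π) + r/ρ - 1 + λ₁₀ b - log(ρ⁻¹ - π h'(π)) = 0 for all π ∈ (0,1). -/

import Mathlib

open Set Real

theorem stmt_1 (ρ l10 r b : ℝ) (hρ : 0 < ρ) (hl : 0 ≤ l10)
    (h : ℝ → ℝ)
    (hh : ∀ p : ℝ, h p =
      (r/ρ - 1 + Real.log ρ + l10 * b + Real.log (1 - p ^ (1 + l10/ρ))) / (ρ + l10)) :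
    ∀ p ∈ Ioo (0:ℝ) 1,
      -(ρ + l10) * h p + r/ρ - 1 + l10 * b - Real.log (ρ⁻¹ - p * deriv h p) = 0 := by
  intro p hp
  obtain ⟨hp0, hp1⟩ := hp
  set α : ℝ := 1 + l10/ρ with hα
  have hρ0 : ρ ≠ 0 := ne_of_gt hρ
  have hα1 : (1:ℝ) ≤ α := by
    have : 0 ≤ l10/ρ := div_nonneg hl hρ.le
    simp [hα]; linarith
  have hαpos : 0 < α := lt_of_lt_of_le one_pos hα1
  have hpα1 : p ^ α < 1 := Real.rpow_lt_one hp0.le hp1 hαpos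
  have hpαpos : 0 < p ^ α := Real.rpow_pos_of_pos hp0 α
  have hpos : 0 < 1 - p ^ α := by linarith
  have hsum : 0 < ρ + l10 := by linarith
  -- derivative
  have H1 : HasDerivAt (fun x : ℝ => x ^ α) (α * p ^ (α - 1)) p :=
    Real.hasDerivAt_rpow_const (Or.inr hα1)
  have H2 : HasDerivAt (fun x : ℝ => 1 - x ^ α) (0 - α * p ^ (α - 1)) p :=
    (hasDerivAt_const p (1:ℝ)).sub H1
  have H3 : HasDerivAt (fun x : ℝ => Real.log (1 - x ^ α))
      ((0 - α * p ^ (α - 1)) / (1 - p ^ α)) p := H2.log (ne_of_gt hpos)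
  have H4 : HasDerivAt h
      ((0 + (0 - α * p ^ (α - 1)) / (1 - p ^ α)) / (ρ + l10)) p := by
    have := ((hasDerivAt_const p (r/ρ - 1 + Real.log ρ + l10 * b)).add H3).div_const (ρ + l10)
    convert this using 1 <;> first | rfl | (funext x; rw [hh x]; rfl)
  have hd : deriv h p = (0 + (0 - α * p ^ (α - 1)) / (1 - p ^ α)) / (ρ + l10) := H4.deriv
  have hpp : p * p ^ (α - 1) = p ^ α := by
    rw [mul_comm, ← Real.rpow_add_one (ne_of_gt hp0)]
    ring_nf
  have key : ρ⁻¹ - p * deriv h p = ((1 - p ^ α) * ρ)⁻¹ := by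
    rw [hd]
    have hαρ : α * ρ = ρ + l10 := by rw [hα]; field_simp
    field_simp
    linear_combination (ρ * α * hpp + p ^ α * hαρ)
  rw [key, Real.log_inv, Real.log_mul (ne_of_gt hpos) hρ0, hh p]
  field_simp
  ring
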